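/- Let V be a real vector space of dimension 2n with a Calabi-Yau structure Ω⁰ (so Ker Ω⁰ has complex dimension n and Ker Ω⁰ ∩ conj(Ker Ω⁰) = 0). The isotropy group H = {g ∈ GL(V) : ρ_g Ω⁰ = Ω⁰} of the induced GL(V)-action on complex n-forms is isomorphic to SL(n, ℂ), regarded as the subgroup of GL(V) of real-linear maps commuting with the induced complex structure I_{Ω⁰} and of complex determinant 1. -/

import Mathlib

/-
STATEMENT 1: Let V be a real vector space of dimension 2n with a Calabi-Yau
structure Ω⁰ (a nonzero complex n-form of type (n,0) with respect to the
induced complex structure I = I_{Ω⁰}).  The isotropy group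
H = {g ∈ GL(V) : ρ_g Ω⁰ = Ω⁰} of the GL(V)-action on complex n-forms is
isomorphic to SL(n, ℂ).
We model Ω⁰ as a complex-valued real-alternating n-form on V; the Calabi-Yau
condition is packaged by the complex structure I (with I² = −1) for which Ω⁰
is of type (n,0) and Ω⁰ ≠ 0.  Since the set {g : ρ_g Ω⁰ = Ω⁰} coincides with
{g : Ω⁰ ∘ g = Ω⁰}, we use the latter as the stabilizer.
-/

variable {n : ℕ} {V : Type*} [AddCommGroup V] [Module ℝ V]

/-- The isotropy group `{g ∈ GL(V) : Ω ∘ g = Ω}` of an n-form. -/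
def formStabilizer (Ω : AlternatingMap ℝ V ℂ (Fin n)) : Subgroup (V ≃ₗ[ℝ] V) where
  carrier := {g | ∀ x : Fin n → V, Ω (fun i => g (x i)) = Ω x}
  one_mem' := by intro x; rfl
  mul_mem' := by
    intro a b ha hb x
    exact (ha fun i => b (x i)).trans (hb x)
  inv_mem' := by
    intro a ha x
    have h := ha fun i => a.symm (x i)
    simp only [LinearEquiv.apply_symm_apply] at h
    exact h.symm

theorem stmt_1 [FiniteDimensional ℝ V]
    (hn : 0 < n)
    (hdim : Module.finrank ℝ V = 2 * n)
    (Ω : AlternatingMap ℝ V ℂ (Fin n)) (hΩ : Ω ≠ 0)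
    (I : V →ₗ[ℝ] V) (hI : ∀ v : V, I (I v) = -v)
    -- Ω is of type (n,0) with respect to I (so Ker Ω⊗ℂ is the +i eigenspace
    -- of I, i.e. I = I_Ω):
    (htype : ∀ (x : Fin n → V) (j : Fin n),
      Ω (Function.update x j (I (x j))) = Complex.I * Ω x) :
    Nonempty (formStabilizer Ω ≃* Matrix.SpecialLinearGroup (Fin n) ℂ) := by
  -- complex module structure on V induced by I
  letI mC : Module ℂ V :=
    { smul := fun z v => z.re • v + z.im • I v
      one_smul := fun v => by
        show (1:ℂ).re • v + (1:ℂ).im • I v = v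
        simp
      mul_smul := fun z w v => by
        show (z*w).re • v + (z*w).im • I v
            = z.re • (w.re • v + w.im • I v) + z.im • I (w.re • v + w.im • I v)
        simp only [map_add, map_smul, hI, Complex.mul_re, Complex.mul_im, smul_neg]
        module
      smul_zero := fun z => by
        show z.re • (0:V) + z.im • I 0 = 0
        simp
      smul_add := fun z u v => by
        show z.re • (u+v) + z.im • I (u+v)
            = (z.re • u + z.im • I u) + (z.re • v + z.im • I v)
        simp only [map_add]
        module
      add_smul := fun z w v => by
        show (z+w).re • v + (z+w).im • I v
            = (z.re • v + z.im • I v) + (w.re • v + w.im • I v)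
        simp only [Complex.add_re, Complex.add_im]
        module
      zero_smul := fun v => by
        show (0:ℂ).re • v + (0:ℂ).im • I v = 0
        simp }
  haveI : IsScalarTower ℝ ℂ V :=
    ⟨fun a z v => by
      show (a • z).re • v + (a • z).im • I v = a • (z.re • v + z.im • I v)
      simp only [Complex.real_smul, Complex.mul_re, Complex.mul_im, Complex.ofReal_re,
        Complex.ofReal_im]
      module⟩
  haveI : FiniteDimensional ℂ V := FiniteDimensional.right ℝ ℂ V
  have hkn : Module.finrank ℂ V = n := by
    have h := Module.finrank_mul_finrank ℝ ℂ V
    rw [Complex.finrank_real_complex, hdim] at h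
    omega
  -- generalized type condition
  have htype' : ∀ (x : Fin n → V) (j : Fin n) (v : V),
      Ω (Function.update x j (I v)) = Complex.I * Ω (Function.update x j v) := by
    intro x j v
    have h := htype (Function.update x j v) j
    rwa [Function.update_self, Function.update_idem] at h
  -- the complex-alternating version of Ω
  let Ωc : AlternatingMap ℂ V ℂ (Fin n) :=
    { toFun := Ω
      map_update_add' := fun v i a c => Ω.map_update_add v i a c
      map_update_smul' := fun v i z a => by
        rename_i instD
        rw [Subsingleton.elim instD (instDecidableEqFin n)]
        clear instD
        show Ω (Function.update v i (z.re • a + z.im • I a))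
            = z * Ω (Function.update v i a)
        rw [Ω.map_update_add, Ω.map_update_smul, Ω.map_update_smul, htype' v i a]
        simp only [Complex.real_smul]
        linear_combination (Ω (Function.update v i a)) * Complex.re_add_im z
      map_eq_zero_of_eq' := Ω.map_eq_zero_of_eq' }
  have hΩc : ∀ x : Fin n → V, Ωc x = Ω x := fun _ => rfl
  let b : Module.Basis (Fin n) ℂ V := Module.finBasisOfFinrankEq ℂ V hkn
  -- Ωc is a nonzero multiple of the determinant
  have hbd := Ωc.eq_smul_basis_det b
  have hb0 : Ωc b ≠ 0 := by
    intro h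
    apply hΩ
    ext x
    have := congrArg (fun f : AlternatingMap ℂ V ℂ (Fin n) => f x) hbd
    simp only [AlternatingMap.smul_apply, h, zero_smul] at this
    simpa [hΩc] using this
  -- the determinant relation
  have hdet : ∀ (f : V →ₗ[ℂ] V) (x : Fin n → V),
      Ωc (fun i => f (x i)) = LinearMap.det f * Ωc x := by
    intro f x
    have h1 : Ωc (fun i => f (x i)) = Ωc b * b.det (f ∘ x) := by
      conv_lhs => rw [hbd]
      rfl
    have h2 : Ωc x = Ωc b * b.det x := by
      conv_lhs => rw [hbd]
      rfl
    rw [h1, h2, b.det_comp f x]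
    ring
  -- kernel of Ω is trivial
  have hker : ∀ w : V, (∀ (x : Fin n → V) (j : Fin n), Ω (Function.update x j w) = 0) →
      w = 0 := by
    intro w hw
    have hrep : ∀ k : Fin n, b.repr w k = 0 := by
      intro k
      let L : V →ₗ[ℂ] ℂ :=
        { toFun := fun v => Ωc (Function.update b k v)
          map_add' := fun u v => Ωc.map_update_add b k u v
          map_smul' := fun z v => Ωc.map_update_smul b k z v }
      have hLw : L w = 0 := by
        have := hw b k
        simpa [L, hΩc] using this
      have hexp : L w = b.repr w k * Ωc b := by
        conv_lhs => rw [← b.sum_repr w]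
        rw [map_sum]
        rw [Finset.sum_eq_single k]
        · simp only [map_smul, smul_eq_mul, L, LinearMap.coe_mk, AddHom.coe_mk]
          rw [Function.update_eq_self]
        · intro i _ hik
          simp only [map_smul, smul_eq_mul, L, LinearMap.coe_mk, AddHom.coe_mk]
          have : Ωc (Function.update b k (b i)) = 0 := by
            refine Ωc.map_eq_zero_of_eq _ (i := i) (j := k) ?_ hik
            simp [Function.update_of_ne hik]
          rw [this, mul_zero]
        · intro h
          exact absurd (Finset.mem_univ k) h
      have := hexp.symm.trans hLw
      exact (mul_eq_zero.mp this).resolve_right hb0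
    have : b.repr w = 0 := by
      ext k
      simp [hrep k]
    simpa using congrArg b.repr.symm this
  -- every stabilizer element commutes with I
  have hcomm : ∀ (g : V ≃ₗ[ℝ] V), (∀ x : Fin n → V, Ω (fun i => g (x i)) = Ω x) →
      ∀ v : V, g (I v) = I (g v) := by
    intro g hg v
    suffices h : g.symm (I (g v)) = I v by
      have := congrArg g h
      rw [g.apply_symm_apply] at this
      exact this.symm
    have key : ∀ (x : Fin n → V) (j : Fin n) (u : V),
        Ω (Function.update x j (g.symm (I (g u)))) = Complex.I * Ω (Function.update x j u) := by
      intro x j u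
      have h1 : Ω (Function.update x j (g.symm (I (g u))))
          = Ω (fun i => g (Function.update x j (g.symm (I (g u))) i)) := (hg _).symm
      have h2 : (fun i => g (Function.update x j (g.symm (I (g u))) i))
          = Function.update (fun i => g (x i)) j (I (g u)) := by
        funext i
        by_cases hij : i = j
        · subst hij; simp
        · simp [Function.update_of_ne hij]
      have h3 : Function.update (fun i => g (x i)) j (g u)
          = fun i => g (Function.update x j u i) := by
        funext i
        by_cases hij : i = j
        · subst hij; simp
        · simp [Function.update_of_ne hij]
      rw [h1, h2, htype' (fun i => g (x i)) j (g u), h3, hg]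
    have hz : Ω.toMultilinearMap ≠ 0 → True := fun _ => trivial
    have hzero : ∀ (x : Fin n → V) (j : Fin n),
        Ω (Function.update x j (g.symm (I (g v)) - I v)) = 0 := by
      intro x j
      rw [Ω.map_update_sub, key x j v, htype' x j v, sub_self]
    have := hker _ hzero
    exact sub_eq_zero.mp this
  -- complexification of a stabilizer element
  let toC : formStabilizer Ω → (V ≃ₗ[ℂ] V) := fun g =>
    { toFun := g.1
      invFun := g.1.symm
      left_inv := g.1.left_inv
      right_inv := g.1.right_inv
      map_add' := g.1.map_add
      map_smul' := fun z v => by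
        show g.1 (z.re • v + z.im • I v) = z • g.1 v
        rw [map_add, map_smul, map_smul, hcomm g.1 g.2 v]
        rfl }
  have htoC : ∀ (g : formStabilizer Ω) (v : V), toC g v = g.1 v := fun _ _ => rfl
  have hdet1 : ∀ g : formStabilizer Ω, LinearMap.det (toC g).toLinearMap = 1 := by
    intro g
    have h := hdet (toC g).toLinearMap b
    have h2 : Ωc (fun i => (toC g).toLinearMap (b i)) = Ωc b := by
      have := g.2 b
      exact this
    rw [h2] at h
    exact mul_right_cancel₀ hb0 (by rw [one_mul, ← h])
  -- the monoid hom to SL(n, ℂ)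
  let φ : formStabilizer Ω →* Matrix.SpecialLinearGroup (Fin n) ℂ :=
    MonoidHom.mk'
      (fun g => ⟨LinearMap.toMatrix b b (toC g).toLinearMap, by
        rw [LinearMap.det_toMatrix]
        exact hdet1 g⟩)
      (by
        intro g h
        apply Subtype.ext
        show LinearMap.toMatrix b b (toC (g*h)).toLinearMap
            = LinearMap.toMatrix b b (toC g).toLinearMap
              * LinearMap.toMatrix b b (toC h).toLinearMap
        rw [← LinearMap.toMatrix_comp]
        congr 1)
  have hinj : Function.Injective φ := by
    intro g h hgh
    have h1 : (toC g).toLinearMap = (toC h).toLinearMap :=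
      (LinearMap.toMatrix b b).injective (congrArg Subtype.val hgh)
    apply Subtype.ext
    apply LinearEquiv.ext
    intro v
    exact congrArg (fun f : V →ₗ[ℂ] V => f v) h1
  have hsurj : Function.Surjective φ := by
    intro M
    let f : V →ₗ[ℂ] V := Matrix.toLin b b M.1
    have hMf : LinearMap.toMatrix b b f = M.1 := LinearMap.toMatrix_toLin b b M.1
    have hdetf : IsUnit (LinearMap.toMatrix b b f).det := by
      rw [hMf, M.2]; exact isUnit_one
    let e : V ≃ₗ[ℂ] V := LinearEquiv.ofIsUnitDet hdetf
    have he : e.toLinearMap = f := LinearEquiv.coe_ofIsUnitDet hdetf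
    have hdete : LinearMap.det e.toLinearMap = 1 := by
      rw [he]
      rw [show LinearMap.det f = M.1.det from LinearMap.det_toLin b M.1, M.2]
    let gR : V ≃ₗ[ℝ] V := e.restrictScalars ℝ
    have hst : gR ∈ formStabilizer Ω := by
      intro x
      have h1 : Ω (fun i => gR (x i)) = Ωc (fun i => e.toLinearMap (x i)) := rfl
      rw [h1, hdet e.toLinearMap x, hdete, one_mul, hΩc]
    refine ⟨⟨gR, hst⟩, ?_⟩
    apply Subtype.ext
    show LinearMap.toMatrix b b (toC ⟨gR, hst⟩).toLinearMap = M.1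
    have h2 : (toC ⟨gR, hst⟩).toLinearMap = f := by
      ext v
      show gR v = f v
      exact congrArg (fun f : V →ₗ[ℂ] V => f v) he
    rw [h2, hMf]
  exact ⟨MulEquiv.ofBijective φ ⟨hinj, hsurj⟩⟩
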